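/- arXiv:1207.4588 — 3 statements merged into one kernel-verified Lean document; each statement's English description precedes it below -/
import Mathlib

section
/- Let k be a field, A = k[[x,y]], and s ≥ 2 an integer. For the ideal I = (x² - y^s, xy, y^{s+1}) ⊆ A, the quotient A/I has length s + 2, y^{s+1} ∈ I, y^s ∉ I, so the least power of y contained in I is y^{s+1}, one less than the colength s + 2. -/
/-- The length of a module, defined as the Krull dimension of its lattice of submodules
(for a module of finite length this is the common length of all composition series). -/
noncomputable def moduleLength (R M : Type*) [Ring R] [AddCommGroup M] [Module R M] :
    WithBot ℕ∞ :=
  Order.krullDim (Submodule R M)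


open MvPowerSeries Finsupp

namespace ICT

variable {k : Type*} [Field k]

noncomputable def E (a b : ℕ) : Fin 2 →₀ ℕ := Finsupp.single 0 a + Finsupp.single 1 b

@[simp] lemma E_apply0 (a b : ℕ) : E a b 0 = a := by simp [E, Finsupp.single_apply]
@[simp] lemma E_apply1 (a b : ℕ) : E a b 1 = b := by simp [E, Finsupp.single_apply]

lemma eq_E (m : Fin 2 →₀ ℕ) : m = E (m 0) (m 1) := by
  ext i; fin_cases i <;> simp

@[simp] lemma E_le_iff {a b c d : ℕ} : E a b ≤ E c d ↔ a ≤ c ∧ b ≤ d := by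
  constructor
  · intro h; exact ⟨by simpa using h 0, by simpa using h 1⟩
  · intro ⟨h1, h2⟩ i; fin_cases i <;> simpa

@[simp] lemma E_sub (a b c d : ℕ) : E a b - E c d = E (a - c) (b - d) := by
  ext i; fin_cases i <;> simp [Finsupp.tsub_apply]

@[simp] lemma E_add (a b c d : ℕ) : E a b + E c d = E (a + c) (b + d) := by
  ext i; fin_cases i <;> simp

@[simp] lemma E_eq_iff {a b c d : ℕ} : E a b = E c d ↔ a = c ∧ b = d := by
  constructor
  · intro h; exact ⟨by rw [← E_apply0 a b, h, E_apply0], by rw [← E_apply1 a b, h, E_apply1]⟩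
  · rintro ⟨rfl, rfl⟩; rfl

lemma single0 (a : ℕ) : Finsupp.single (0 : Fin 2) a = E a 0 := by simp [E]
lemma single1 (b : ℕ) : Finsupp.single (1 : Fin 2) b = E 0 b := by simp [E]

/-- coefficient of x^a y^b -/
noncomputable def cf (a b : ℕ) (f : MvPowerSeries (Fin 2) k) : k := coeff (R := k) (E a b) f

lemma cf_add (a b : ℕ) (f g : MvPowerSeries (Fin 2) k) :
    cf a b (f + g) = cf a b f + cf a b g := map_add _ _ _

lemma cf_sub (a b : ℕ) (f g : MvPowerSeries (Fin 2) k) :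
    cf a b (f - g) = cf a b f - cf a b g := map_sub _ _ _

lemma cf_mul_xpow (g : MvPowerSeries (Fin 2) k) (n a b : ℕ) :
    cf a b (g * X 0 ^ n) = if n ≤ a then cf (a - n) b g else 0 := by
  rw [cf, X_pow_eq, coeff_mul_monomial, single0]
  split_ifs with h1 h2 h3
  · rw [mul_one]; congr 1; simp
  · exact absurd (E_le_iff.mp h1).1 h2
  · exact absurd (E_le_iff.mpr ⟨h3, Nat.zero_le _⟩) h1
  · rfl

lemma cf_mul_ypow (g : MvPowerSeries (Fin 2) k) (n a b : ℕ) :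
    cf a b (g * X 1 ^ n) = if n ≤ b then cf a (b - n) g else 0 := by
  rw [cf, X_pow_eq, coeff_mul_monomial, single1]
  split_ifs with h1 h2 h3
  · rw [mul_one]; congr 1; simp
  · exact absurd (E_le_iff.mp h1).2 h2
  · exact absurd (E_le_iff.mpr ⟨Nat.zero_le _, h3⟩) h1
  · rfl

lemma cf_mul_xy (g : MvPowerSeries (Fin 2) k) (a b : ℕ) :
    cf a b (g * (X 0 * X 1)) = if 1 ≤ a ∧ 1 ≤ b then cf (a - 1) (b - 1) g else 0 := by
  have : (X 0 * X 1 : MvPowerSeries (Fin 2) k) = monomial (R := k) (E 1 1) 1 := by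
    rw [X_def, X_def, monomial_mul_monomial, one_mul]; rfl
  rw [cf, this, coeff_mul_monomial]
  split_ifs with h1 h2 h3
  · rw [mul_one]; congr 1; rw [E_sub]
  · exact absurd (E_le_iff.mp h1) h2
  · exact absurd (E_le_iff.mpr h3) h1
  · rfl

lemma cf_xpow (n a b : ℕ) : cf a b (X 0 ^ n : MvPowerSeries (Fin 2) k) =
    if a = n ∧ b = 0 then 1 else 0 := by
  rw [cf, coeff_X_pow, single0]
  split_ifs with h1 h2 h3
  · rfl
  · exact absurd (E_eq_iff.mp h1) h2
  · exact absurd (E_eq_iff.mpr h3) h1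
  · rfl

lemma cf_ypow (n a b : ℕ) : cf a b (X 1 ^ n : MvPowerSeries (Fin 2) k) =
    if a = 0 ∧ b = n then 1 else 0 := by
  rw [cf, coeff_X_pow, single1]
  split_ifs with h1 h2 h3
  · rfl
  · exact absurd (E_eq_iff.mp h1) h2
  · exact absurd (E_eq_iff.mpr h3) h1
  · rfl

lemma cf_one (a b : ℕ) : cf a b (1 : MvPowerSeries (Fin 2) k) =
    if a = 0 ∧ b = 0 then 1 else 0 := by
  have : (1 : MvPowerSeries (Fin 2) k) = X 0 ^ 0 := by simp
  rw [this, cf_xpow]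

lemma mem_span_triple {R : Type*} [CommRing R] {a b c x : R} :
    x ∈ Ideal.span {a, b, c} ↔ ∃ u v w, x = u * a + v * b + w * c := by
  constructor
  · intro h
    obtain ⟨u, z, hz, rfl⟩ := Submodule.mem_span_insert.mp h
    obtain ⟨v, z', hz', rfl⟩ := Submodule.mem_span_insert.mp hz
    obtain ⟨w, rfl⟩ := Ideal.mem_span_singleton'.mp hz'
    exact ⟨u, v, w, by rw [smul_eq_mul, smul_eq_mul]; ring⟩
  · rintro ⟨u, v, w, rfl⟩
    refine Ideal.add_mem _ (Ideal.add_mem _ ?_ ?_) ?_ <;>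
      exact Ideal.mul_mem_left _ _ (Ideal.subset_span (by simp))

variable (s : ℕ)

/-- the key coefficient computation for a generic element of the ideal -/
lemma cf_combo (u v w : MvPowerSeries (Fin 2) k) (a b : ℕ) :
    cf a b (u * ((X 0 : MvPowerSeries (Fin 2) k) ^ 2 - X 1 ^ s) + v * (X 0 * X 1)
        + w * X 1 ^ (s + 1)) =
      ((if 2 ≤ a then cf (a - 2) b u else 0) - (if s ≤ b then cf a (b - s) u else 0))
      + (if 1 ≤ a ∧ 1 ≤ b then cf (a - 1) (b - 1) v else 0)
      + (if s + 1 ≤ b then cf a (b - (s + 1)) w else 0) := by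
  rw [cf_add, cf_add, mul_sub, cf_sub, cf_mul_xpow, cf_mul_ypow, cf_mul_xy, cf_mul_ypow]

theorem vanish_of_mem {f : MvPowerSeries (Fin 2) k} (hs : 2 ≤ s)
    (hf : f ∈ Ideal.span {(X 0 : MvPowerSeries (Fin 2) k) ^ 2 - X 1 ^ s, X 0 * X 1,
      X 1 ^ (s + 1)}) :
    (∀ b < s, cf 0 b f = 0) ∧ cf 1 0 f = 0 ∧ cf 0 s f + cf 2 0 f = 0 := by
  obtain ⟨u, v, w, rfl⟩ := mem_span_triple.mp hf
  refine ⟨fun b hb => ?_, ?_, ?_⟩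
  · rw [cf_combo, if_neg (by omega), if_neg (by omega), if_neg (by omega), if_neg (by omega)]
    ring
  · rw [cf_combo, if_neg (by omega), if_neg (by omega), if_neg (by omega), if_neg (by omega)]
    ring
  · rw [cf_combo, cf_combo, if_neg (by omega), if_pos (by omega), if_neg (by omega),
      if_neg (by omega), if_pos (by omega), if_neg (by omega), if_neg (by omega),
      if_neg (by omega)]
    rw [Nat.sub_self]; ring

end ICT

namespace ICT
variable {k : Type*} [Field k] (s : ℕ)

theorem mem_of_vanish (hs : 2 ≤ s) {f : MvPowerSeries (Fin 2) k}
    (h0 : ∀ b < s, cf 0 b f = 0) (h1 : cf 1 0 f = 0) (h2 : cf 0 s f + cf 2 0 f = 0) :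
    f ∈ Ideal.span {(X 0 : MvPowerSeries (Fin 2) k) ^ 2 - X 1 ^ s, X 0 * X 1,
      X 1 ^ (s + 1)} := by
  classical
  set U : MvPowerSeries (Fin 2) k := fun m => cf (m 0 + 2) (m 1) f with hUdef
  set V : MvPowerSeries (Fin 2) k := fun m =>
    (if m 0 = 0 then cf 1 (m 1 + 1) f else 0)
      + (if s - 1 ≤ m 1 then cf (m 0 + 3) (m 1 - (s - 1)) f else 0) with hVdef
  set W : MvPowerSeries (Fin 2) k := fun m =>
    if m 0 = 0 then cf 0 (m 1 + s + 1) f + cf 2 (m 1 + 1) f else 0 with hWdef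
  have hU : ∀ a b, cf a b U = cf (a + 2) b f := by
    intro a b; show U (E a b) = _; rw [hUdef]; simp
  have hV : ∀ a b, cf a b V = (if a = 0 then cf 1 (b + 1) f else 0)
      + (if s - 1 ≤ b then cf (a + 3) (b - (s - 1)) f else 0) := by
    intro a b; show V (E a b) = _; rw [hVdef]; simp
  have hW : ∀ a b, cf a b W = if a = 0 then cf 0 (b + s + 1) f + cf 2 (b + 1) f else 0 := by
    intro a b; show W (E a b) = _; rw [hWdef]; simp
  apply mem_span_triple.mpr
  refine ⟨U, V, W, ?_⟩
  apply MvPowerSeries.ext; intro m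
  rw [eq_E m]
  show cf (m 0) (m 1) f = cf (m 0) (m 1) _
  generalize m 0 = a
  generalize m 1 = b
  rw [cf_combo]
  simp only [hU, hV, hW]
  by_cases ha2 : 2 ≤ a
  · rw [if_pos ha2, if_neg (by omega : ¬ a - 1 = 0), if_neg (by omega : ¬ a = 0),
      show a - 2 + 2 = a by omega]
    by_cases hb1 : 1 ≤ b
    · rw [if_pos (by omega : 1 ≤ a ∧ 1 ≤ b)]
      by_cases hbs : s ≤ b
      · rw [if_pos hbs, if_pos (by omega : s - 1 ≤ b - 1),
          show a - 1 + 3 = a + 2 by omega, show b - 1 - (s - 1) = b - s by omega, ite_self]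
        ring
      · rw [if_neg hbs, if_neg (by omega : ¬ s - 1 ≤ b - 1), if_neg (by omega : ¬ s + 1 ≤ b)]
        ring
    · rw [if_neg (by omega : ¬ s ≤ b), if_neg (by omega : ¬ (1 ≤ a ∧ 1 ≤ b)),
        if_neg (by omega : ¬ s + 1 ≤ b)]
      ring
  · have ha : a = 0 ∨ a = 1 := by omega
    rcases ha with rfl | rfl
    · rw [if_neg (by omega : ¬ 2 ≤ 0), if_neg (by omega : ¬ (1 ≤ 0 ∧ 1 ≤ b)), if_pos rfl]
      by_cases hbs : s ≤ b
      · by_cases hbs1 : s + 1 ≤ b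
        · rw [if_pos hbs, if_pos hbs1, show b - (s + 1) + s + 1 = b by omega,
            show b - (s + 1) + 1 = b - s by omega]
          ring
        · have hbe : b = s := by omega
          subst hbe
          rw [if_pos hbs, if_neg hbs1, Nat.sub_self]
          linear_combination h2
      · rw [if_neg hbs, if_neg (by omega : ¬ s + 1 ≤ b), h0 b (by omega)]
        ring
    · rw [if_neg (by omega : ¬ 2 ≤ 1), if_neg (by omega : ¬ (1:ℕ) = 0), ite_self,
        if_pos rfl]
      by_cases hb1 : 1 ≤ b
      · rw [if_pos (by omega : 1 ≤ 1 ∧ 1 ≤ b), show b - 1 + 1 = b by omega]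
        by_cases hbs : s ≤ b
        · rw [if_pos hbs, if_pos (by omega : s - 1 ≤ b - 1),
            show b - 1 - (s - 1) = b - s by omega]
          ring
        · rw [if_neg hbs, if_neg (by omega : ¬ s - 1 ≤ b - 1)]
          ring
      · obtain rfl : b = 0 := by omega
        rw [if_neg (by omega : ¬ s ≤ 0), if_neg (by omega : ¬ (1 ≤ 1 ∧ 1 ≤ 0))]
        linear_combination h1
end ICT

namespace ICT
variable (k : Type*) [Field k] (s : ℕ)

/-- The ideal I = (x² - y^s, xy, y^{s+1}) -/
noncomputable def Is : Ideal (MvPowerSeries (Fin 2) k) :=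
  Ideal.span {(X 0 : MvPowerSeries (Fin 2) k) ^ 2 - X 1 ^ s, X 0 * X 1, X 1 ^ (s + 1)}

variable {k s}

theorem vanish1 (hs : 2 ≤ s) {f : MvPowerSeries (Fin 2) k}
    (hf : f ∈ Is k s ⊔ Ideal.span {X 1 ^ s}) :
    (∀ b < s, cf 0 b f = 0) ∧ cf 1 0 f = 0 := by
  obtain ⟨p, hp, q, hq, rfl⟩ := Submodule.mem_sup.mp hf
  obtain ⟨r, rfl⟩ := Ideal.mem_span_singleton'.mp hq
  obtain ⟨h0, h1, -⟩ := vanish_of_mem s hs hp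
  constructor
  · intro b hb
    rw [cf_add, h0 b hb, cf_mul_ypow, if_neg (by omega)]; ring
  · rw [cf_add, h1, cf_mul_ypow, if_neg (by omega)]; ring

theorem vanish2 (hs : 2 ≤ s) {m : ℕ} (hm : m ≤ s) {f : MvPowerSeries (Fin 2) k}
    (hf : f ∈ Is k s ⊔ Ideal.span {X 0, X 1 ^ m}) {b : ℕ} (hb : b < m) :
    cf 0 b f = 0 := by
  obtain ⟨p, hp, q, hq, rfl⟩ := Submodule.mem_sup.mp hf
  obtain ⟨u, v, rfl⟩ := Ideal.mem_span_pair.mp hq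
  obtain ⟨h0, h1, -⟩ := vanish_of_mem s hs hp
  have hx : cf 0 b (u * X 0) = 0 := by
    rw [show (X 0 : MvPowerSeries (Fin 2) k) = X 0 ^ 1 by rw [pow_one], cf_mul_xpow,
      if_neg (by omega)]
  rw [cf_add, cf_add, h0 b (by omega), hx, cf_mul_ypow, if_neg (by omega)]; ring

variable (k s)

/-- the chain of ideals -/
noncomputable def chainI (j : ℕ) : Ideal (MvPowerSeries (Fin 2) k) :=
  if j = 0 then Is k s
  else if j = 1 then Is k s ⊔ Ideal.span {X 1 ^ s}
  else if j ≤ s + 1 then Is k s ⊔ Ideal.span {X 0, X 1 ^ (s + 2 - j)}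
  else ⊤

variable {k s}

lemma chainI_zero : chainI k s 0 = Is k s := by simp [chainI]
lemma chainI_one : chainI k s 1 = Is k s ⊔ Ideal.span {X 1 ^ s} := by simp [chainI]
lemma chainI_mid {j : ℕ} (h2 : 2 ≤ j) (hj : j ≤ s + 1) :
    chainI k s j = Is k s ⊔ Ideal.span {X 0, X 1 ^ (s + 2 - j)} := by
  rw [chainI, if_neg (by omega), if_neg (by omega), if_pos hj]
lemma chainI_big {j : ℕ} (hj : s + 2 ≤ j) : chainI k s j = ⊤ := by
  rw [chainI, if_neg (by omega), if_neg (by omega), if_neg (by omega)]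

lemma Is_le_chainI (j : ℕ) : Is k s ≤ chainI k s j := by
  rw [chainI]
  split_ifs
  exacts [le_rfl, le_sup_left, le_sup_left, le_top]

lemma cf_ypow_self (n : ℕ) : cf 0 n ((X 1 : MvPowerSeries (Fin 2) k) ^ n) = 1 := by
  rw [cf_ypow, if_pos ⟨rfl, rfl⟩]

lemma ypow_not_mem_Is (hs : 2 ≤ s) {t : ℕ} (ht : t ≤ s) :
    (X 1 : MvPowerSeries (Fin 2) k) ^ t ∉ Is k s := by
  intro h
  obtain ⟨h0, h1, h2⟩ := vanish_of_mem s hs h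
  rcases lt_or_eq_of_le ht with ht' | rfl
  · have := h0 t ht'
    rw [cf_ypow_self] at this
    exact one_ne_zero this
  · rw [cf_ypow_self, cf_ypow, if_neg (by omega)] at h2
    simpa using h2

lemma chainI_lt (hs : 2 ≤ s) {j : ℕ} (hj : j ≤ s + 1) : chainI k s j < chainI k s (j + 1) := by
  rcases Nat.lt_or_ge j 2 with hj2 | hj2
  · interval_cases j
    · rw [chainI_zero, chainI_one]
      refine lt_of_le_of_ne le_sup_left (fun h => ?_)
      have : (X 1 : MvPowerSeries (Fin 2) k) ^ s ∈ Is k s := by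
        rw [h]
        exact Submodule.mem_sup_right (Ideal.subset_span rfl)
      exact ypow_not_mem_Is hs le_rfl this
    · rw [chainI_one, chainI_mid (by omega) (by omega), show s + 2 - 2 = s by omega]
      refine lt_of_le_of_ne (sup_le_sup_left (Ideal.span_mono (by simp)) _) (fun h => ?_)
      have hx : (X 0 : MvPowerSeries (Fin 2) k) ∈ Is k s ⊔ Ideal.span {X 1 ^ s} := by
        rw [h]
        exact Submodule.mem_sup_right (Ideal.subset_span (by simp))
      have := (vanish1 hs hx).2
      rw [show (X 0 : MvPowerSeries (Fin 2) k) = X 0 ^ 1 by rw [pow_one], cf_xpow,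
        if_pos ⟨rfl, rfl⟩] at this
      exact one_ne_zero this
  · rcases Nat.lt_or_ge j (s + 1) with hjs | hjs
    · rw [chainI_mid hj2 hj, chainI_mid (by omega) (by omega)]
      refine lt_of_le_of_ne (sup_le_sup_left ?_ _) (fun h => ?_)
      · rw [Ideal.span_le]
        rintro z (rfl | rfl)
        · exact Ideal.subset_span (by simp)
        · refine Ideal.mem_span_pair.mpr ⟨0, X 1, ?_⟩
          rw [zero_mul, zero_add, ← pow_succ', show s + 2 - (j + 1) + 1 = s + 2 - j by omega]
      · have hy : (X 1 : MvPowerSeries (Fin 2) k) ^ (s + 1 - j) ∈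
            Is k s ⊔ Ideal.span {X 0, X 1 ^ (s + 2 - j)} := by
          rw [h, show s + 2 - (j + 1) = s + 1 - j by omega]
          exact Submodule.mem_sup_right (Ideal.subset_span (by simp))
        have := vanish2 hs (by omega : s + 2 - j ≤ s) hy (by omega : s + 1 - j < s + 2 - j)
        rw [cf_ypow_self] at this
        exact one_ne_zero this
    · obtain rfl : j = s + 1 := by omega
      rw [chainI_mid hj2 le_rfl, chainI_big (by omega)]
      refine lt_of_le_of_ne le_top (fun h => ?_)
      have h1 : (1 : MvPowerSeries (Fin 2) k) ∈
          Is k s ⊔ Ideal.span {X 0, X 1 ^ (s + 2 - (s + 1))} := by rw [h]; trivial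
      have := vanish2 hs (by omega : s + 2 - (s + 1) ≤ s) h1 (by omega : 0 < s + 2 - (s + 1))
      rw [cf_one, if_pos ⟨rfl, rfl⟩] at this
      exact one_ne_zero this

variable (k s)

/-- the linear functionals cutting out the ideal -/
noncomputable def Phi : MvPowerSeries (Fin 2) k →ₗ[k] (Fin (s + 2) → k) :=
  LinearMap.pi (fun i =>
    if (i : ℕ) < s then coeff (R := k) (E 0 i)
    else if (i : ℕ) = s then coeff (R := k) (E 0 s) + coeff (R := k) (E 2 0)
    else coeff (R := k) (E 1 0))

variable {k s}

lemma Phi_spec (hs : 2 ≤ s) (f : MvPowerSeries (Fin 2) k) :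
    Phi k s f = 0 ↔
      ((∀ b < s, cf 0 b f = 0) ∧ cf 1 0 f = 0 ∧ cf 0 s f + cf 2 0 f = 0) := by
  constructor
  · intro h
    refine ⟨fun b hb => ?_, ?_, ?_⟩
    · have := congrFun h ⟨b, by omega⟩
      rw [Phi, LinearMap.pi_apply, if_pos (by simpa using hb)] at this
      simpa [cf] using this
    · have := congrFun h ⟨s + 1, by omega⟩
      rw [Phi, LinearMap.pi_apply, if_neg (by simp), if_neg (by simp)] at this
      simpa [cf] using this
    · have := congrFun h ⟨s, by omega⟩
      rw [Phi, LinearMap.pi_apply, if_neg (by simp), if_pos (by simp)] at this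
      simpa [cf] using this
  · rintro ⟨h0, h1, h2⟩
    funext i
    rw [Phi, LinearMap.pi_apply]
    split_ifs with hi his
    · exact h0 i hi
    · simpa [cf] using h2
    · exact h1

lemma ker_Phi (hs : 2 ≤ s) :
    LinearMap.ker (Phi k s) = (Is k s).restrictScalars k := by
  ext f
  rw [LinearMap.mem_ker, Submodule.restrictScalars_mem, Phi_spec hs]
  constructor
  · rintro ⟨h0, h1, h2⟩
    exact mem_of_vanish s hs h0 h1 h2
  · intro h
    exact vanish_of_mem s hs h

set_option synthInstance.maxHeartbeats 1000000 in
lemma length_le (hs : 2 ≤ s)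
    (p : LTSeries (Submodule (MvPowerSeries (Fin 2) k)
      (MvPowerSeries (Fin 2) k ⧸ Is k s))) : p.length ≤ s + 2 := by
  set G : Submodule (MvPowerSeries (Fin 2) k) (MvPowerSeries (Fin 2) k ⧸ Is k s) → ℕ :=
    fun N => Module.finrank k
      (Submodule.map (Phi k s) ((Submodule.comap (Is k s).mkQ N).restrictScalars k)) with hGdef
  have hsur : ∀ N : Submodule (MvPowerSeries (Fin 2) k) (MvPowerSeries (Fin 2) k ⧸ Is k s),
      Submodule.map (Is k s).mkQ (Submodule.comap (Is k s).mkQ N) = N := fun N =>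
    Submodule.map_comap_eq_self (by rw [Submodule.range_mkQ]; exact le_top)
  have hker : ∀ N : Submodule (MvPowerSeries (Fin 2) k) (MvPowerSeries (Fin 2) k ⧸ Is k s),
      LinearMap.ker (Phi k s) ≤ (Submodule.comap (Is k s).mkQ N).restrictScalars k := by
    intro N
    rw [ker_Phi hs]
    intro z hz
    have : (Is k s).mkQ z = 0 := (Submodule.Quotient.mk_eq_zero _).mpr hz
    simp only [Submodule.restrictScalars_mem, Submodule.mem_comap, this]
    exact zero_mem N
  have hG : StrictMono G := by
    intro N1 N2 hN
    have hc : Submodule.comap (Is k s).mkQ N1 < Submodule.comap (Is k s).mkQ N2 :=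
      lt_of_le_of_ne (Submodule.comap_mono hN.le)
        (fun h => hN.ne (by rw [← hsur N1, ← hsur N2, h]))
    have hmap : Submodule.map (Phi k s) ((Submodule.comap (Is k s).mkQ N1).restrictScalars k)
        < Submodule.map (Phi k s) ((Submodule.comap (Is k s).mkQ N2).restrictScalars k) := by
      refine lt_of_le_of_ne (Submodule.map_mono (fun z hz => hc.le hz)) (fun h => ?_)
      have h2 := congrArg (Submodule.comap (Phi k s)) h
      rw [Submodule.comap_map_eq, Submodule.comap_map_eq, sup_eq_left.mpr (hker N1),
        sup_eq_left.mpr (hker N2)] at h2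
      exact hc.ne (Submodule.restrictScalars_injective k _ _ h2)
    exact Submodule.finrank_lt_finrank_of_lt hmap
  have hlast : G p.last ≤ s + 2 := by
    have h1 : Module.finrank k
        (Submodule.map (Phi k s) ((Submodule.comap (Is k s).mkQ p.last).restrictScalars k))
        ≤ Module.finrank k (Fin (s + 2) → k) := Submodule.finrank_le _
    rwa [Module.finrank_fin_fun] at h1
  have := LTSeries.head_add_length_le_nat (p.map G hG)
  have hlen : (p.map G hG).length = p.length := rfl
  have hl : (p.map G hG).last = G p.last := LTSeries.last_map _ _ _
  omega

variable (k s)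

/-- the chain of submodules of the quotient -/
noncomputable def chainSeries (hs : 2 ≤ s) :
    LTSeries (Submodule (MvPowerSeries (Fin 2) k) (MvPowerSeries (Fin 2) k ⧸ Is k s)) where
  length := s + 2
  toFun := fun i => Submodule.map (Is k s).mkQ (chainI k s i)
  step := fun i => by
    have h := chainI_lt (k := k) hs (show (i : ℕ) ≤ s + 1 by omega)
    have hmap : ∀ {J1 J2 : Ideal (MvPowerSeries (Fin 2) k)}, Is k s ≤ J1 → Is k s ≤ J2 →
        J1 < J2 → Submodule.map (Is k s).mkQ J1 < Submodule.map (Is k s).mkQ J2 := by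
      intro J1 J2 hI1 hI2 hlt
      refine lt_of_le_of_ne (Submodule.map_mono hlt.le) (fun e => hlt.ne ?_)
      have he := congrArg (Submodule.comap (Is k s).mkQ) e
      rwa [Submodule.comap_map_mkQ, Submodule.comap_map_mkQ, sup_eq_right.mpr hI1,
        sup_eq_right.mpr hI2] at he
    simp only [Fin.coe_castSucc, Fin.val_succ]
    exact hmap (Is_le_chainI _) (Is_le_chainI _) h

theorem krullDim_eq (hs : 2 ≤ s) :
    Order.krullDim (Submodule (MvPowerSeries (Fin 2) k)
      (MvPowerSeries (Fin 2) k ⧸ Is k s)) = ((s : ℕ∞) + 2 : ℕ∞) := by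
  apply le_antisymm
  · rw [Order.krullDim_eq_iSup_length]
    have : ((s : ℕ∞) + 2 : ℕ∞) = ((s + 2 : ℕ) : ℕ∞) := by push_cast; ring
    rw [this]
    exact_mod_cast iSup_le fun p => by exact_mod_cast length_le hs p
  · have h := Order.LTSeries.length_le_krullDim (chainSeries k s hs)
    have hlen : (chainSeries k s hs).length = s + 2 := rfl
    rw [hlen] at h
    refine le_trans (le_of_eq ?_) h
    norm_cast

end ICT


/-- Let `A = k[[x,y]]`, `s ≥ 2`, and `I = (x² - y^s, xy, y^{s+1})`.  Then `A/I` has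
length `s + 2`, `y^{s+1} ∈ I` and `y^s ∉ I`; so the least power of `y` contained in `I`
is `y^{s+1}`, one less than the colength `s + 2`. -/
theorem ideal_case_three (k : Type*) [Field k] (s : ℕ) (hs : 2 ≤ s) :
    let A := MvPowerSeries (Fin 2) k
    let x : A := MvPowerSeries.X 0
    let y : A := MvPowerSeries.X 1
    let I : Ideal A := Ideal.span {x ^ 2 - y ^ s, x * y, y ^ (s + 1)}
    moduleLength A (A ⧸ I) = (s : ℕ∞) + 2 ∧
    y ^ (s + 1) ∈ I ∧ y ^ s ∉ I ∧ ∀ t < s + 1, y ^ t ∉ I := by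
  intro A x y I
  have hI : I = ICT.Is k s := rfl
  refine ⟨?_, ?_, ?_, ?_⟩
  · rw [moduleLength, hI, ICT.krullDim_eq k s hs]
    norm_cast
  · exact Ideal.subset_span (by simp)
  · rw [hI]; exact ICT.ypow_not_mem_Is hs le_rfl
  · intro t ht
    rw [hI]
    exact ICT.ypow_not_mem_Is hs (by omega)
end

section
/- Let k be a field, d ≥ 2, and F, G ∈ k[z,w] homogeneous of degrees a and a+l with no common zeros. Let I = (x², xy, y^d, xG - y^{d-1}F) ⊆ k[x,y,z,w]. Then the Hilbert polynomial of k[x,y,z,w]/I is d·n + 1 - g, where g = (d-2)(d-3)/2 - a. -/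
open MvPolynomial

namespace ExtremalAux

def rr : Fin 2 → Fin 4 := fun i => ⟨i.val + 2, by omega⟩

lemma rr_inj : Function.Injective rr := by
  intro a b h
  have := congrArg Fin.val h
  simp only [rr] at this
  exact Fin.ext (by omega)

lemma deg4 (s : Fin 4 →₀ ℕ) : s.degree = s 0 + s 1 + s 2 + s 3 := by
  have h : s.degree = ∑ i : Fin 4, s i := by
    rw [Finsupp.degree]
    exact Finset.sum_subset (Finset.subset_univ _)
      (fun i _ hi => by simpa using Finsupp.notMem_support_iff.mp hi)
  rw [h, Fin.sum_univ_four]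

lemma deg2 (s : Fin 2 →₀ ℕ) : s.degree = s 0 + s 1 := by
  have h : s.degree = ∑ i : Fin 2, s i := by
    rw [Finsupp.degree]
    exact Finset.sum_subset (Finset.subset_univ _)
      (fun i _ hi => by simpa using Finsupp.notMem_support_iff.mp hi)
  rw [h, Fin.sum_univ_two]

lemma deg_add4 (s u : Fin 4 →₀ ℕ) : (s + u).degree = s.degree + u.degree := by
  rw [deg4, deg4, deg4]
  simp only [Finsupp.add_apply]
  omega

lemma md0 (t : Fin 2 →₀ ℕ) : (Finsupp.mapDomain rr t) 0 = 0 := by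
  apply Finsupp.mapDomain_notin_range
  rintro ⟨i, hi⟩
  have := congrArg Fin.val hi
  simp [rr] at this

lemma md1 (t : Fin 2 →₀ ℕ) : (Finsupp.mapDomain rr t) 1 = 0 := by
  apply Finsupp.mapDomain_notin_range
  rintro ⟨i, hi⟩
  have := congrArg Fin.val hi
  simp [rr] at this

lemma md2 (t : Fin 2 →₀ ℕ) : (Finsupp.mapDomain rr t) 2 = t 0 := by
  have h := Finsupp.mapDomain_apply rr_inj t 0
  rwa [show rr 0 = 2 from rfl] at h

lemma md3 (t : Fin 2 →₀ ℕ) : (Finsupp.mapDomain rr t) 3 = t 1 := by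
  have h := Finsupp.mapDomain_apply rr_inj t 1
  rwa [show rr 1 = 3 from rfl] at h

lemma md_deg (t : Fin 2 →₀ ℕ) : (Finsupp.mapDomain rr t).degree = t.degree := by
  rw [deg4, deg2, md0, md1, md2, md3]; omega

variable {k : Type*} [Field k]

lemma supp_degree {σ : Type*} {p : MvPolynomial σ k} {e : ℕ} {u : σ →₀ ℕ}
    (hp : p.IsHomogeneous e) (hu : u ∈ p.support) : u.degree = e := by
  by_contra h
  exact (mem_support_iff.mp hu) (hp.coeff_eq_zero h)

noncomputable def rpoly (d : ℕ) (F G : MvPolynomial (Fin 2) k) : MvPolynomial (Fin 4) k :=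
  X 0 * rename rr G - X 1 ^ (d-1) * rename rr F

lemma mem_span_mono (S : Set (Fin 4 →₀ ℕ)) (p : MvPolynomial (Fin 4) k)
    (h : ∀ t ∈ p.support, t ∈ S) :
    p ∈ Submodule.span k ((fun s => monomial s (1:k)) '' S) := by
  rw [p.as_sum]
  refine Submodule.sum_mem _ fun v hv => ?_
  have h2 : monomial v (coeff v p) = (coeff v p) • monomial v (1:k) := by
    rw [smul_monomial, smul_eq_mul, mul_one]
  rw [h2]
  exact Submodule.smul_mem _ _ (Submodule.subset_span ⟨v, h v hv, rfl⟩)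

lemma support_monomial_mul (s : Fin 4 →₀ ℕ) (c : k) (p : MvPolynomial (Fin 4) k) {t}
    (ht : t ∈ (monomial s c * p).support) : ∃ u ∈ p.support, t = s + u := by
  rw [mem_support_iff, coeff_monomial_mul'] at ht
  split_ifs at ht with hle
  · refine ⟨t - s, mem_support_iff.mpr fun h0 => ht (by rw [h0, mul_zero]), ?_⟩
    exact (add_tsub_cancel_of_le hle).symm
  · exact absurd rfl ht

lemma support_rpoly (d : ℕ) (F G : MvPolynomial (Fin 2) k) {t : Fin 4 →₀ ℕ}
    (ht : t ∈ (rpoly d F G).support) :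
    (∃ u ∈ G.support, t = Finsupp.single 0 1 + u.mapDomain rr) ∨
    (∃ u ∈ F.support, t = Finsupp.single 1 (d-1) + u.mapDomain rr) := by
  rw [mem_support_iff, rpoly, coeff_sub] at ht
  have : coeff t (X 0 * rename rr G) ≠ 0 ∨ coeff t (X 1 ^ (d-1) * rename rr F) ≠ 0 := by
    by_contra h
    push_neg at h
    rw [h.1, h.2, sub_zero] at ht
    exact ht rfl
  rcases this with h | h
  · left
    rw [show (X (R := k) 0 : MvPolynomial (Fin 4) k) = monomial (Finsupp.single 0 1) 1 by
      rw [← pow_one (X (R := k) (0 : Fin 4)), X_pow_eq_monomial], coeff_monomial_mul'] at h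
    split_ifs at h with hle
    · rw [one_mul] at h
      obtain ⟨u, hu, hcu⟩ := coeff_rename_ne_zero _ _ _ h
      exact ⟨u, mem_support_iff.mpr hcu, by rw [hu, add_tsub_cancel_of_le hle]⟩
    · exact absurd rfl h
  · right
    rw [X_pow_eq_monomial, coeff_monomial_mul'] at h
    split_ifs at h with hle
    · rw [one_mul] at h
      obtain ⟨u, hu, hcu⟩ := coeff_rename_ne_zero _ _ _ h
      exact ⟨u, mem_support_iff.mpr hcu, by rw [hu, add_tsub_cancel_of_le hle]⟩
    · exact absurd rfl h

lemma homogeneousComponent_mul_right {n e : ℕ} (he : e ≤ n)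
    (g : MvPolynomial (Fin 4) k) (hg : g.IsHomogeneous e) (c : MvPolynomial (Fin 4) k) :
    homogeneousComponent n (c * g) = homogeneousComponent (n - e) c * g := by
  induction c using MvPolynomial.induction_on' with
  | monomial u a =>
    have h1 : (monomial u a * g) ∈ homogeneousSubmodule (Fin 4) k (u.degree + e) :=
      (isHomogeneous_monomial a rfl).mul hg
    have h2 : (monomial u a : MvPolynomial (Fin 4) k) ∈ homogeneousSubmodule (Fin 4) k u.degree :=
      isHomogeneous_monomial a rfl
    rw [homogeneousComponent_of_mem h1, homogeneousComponent_of_mem h2]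
    by_cases h : n = u.degree + e
    · rw [if_pos h, if_pos (by omega)]
    · rw [if_neg h, if_neg (by omega), zero_mul]
  | add p q hp hq => rw [add_mul, map_add, map_add, hp, hq, add_mul]

lemma coeff_key (d : ℕ) (hd : 2 ≤ d) (A B : MvPolynomial (Fin 2) k) (u : Fin 2 →₀ ℕ) :
    coeff (Finsupp.single 0 1 + Finsupp.mapDomain rr u) (rpoly d B A) = coeff u A := by
  have h1 : coeff (Finsupp.single 0 1 + Finsupp.mapDomain rr u)
      (X (0:Fin 4) * rename rr A) = coeff u A := by
    rw [show (X (R := k) (0:Fin 4)) = monomial (Finsupp.single 0 1) 1 by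
      rw [← pow_one (X (R := k) (0 : Fin 4)), X_pow_eq_monomial],
      coeff_monomial_mul, one_mul, coeff_rename_mapDomain rr rr_inj]
  have h2 : coeff (Finsupp.single 0 1 + Finsupp.mapDomain rr u)
      ((X (1:Fin 4)) ^ (d-1) * rename rr B) = 0 := by
    rw [X_pow_eq_monomial, coeff_monomial_mul']
    rw [if_neg]
    rw [Finsupp.single_le_iff]
    simp only [Finsupp.add_apply, Finsupp.single_apply, md1]
    norm_num
    omega
  rw [rpoly, coeff_sub, h1, h2, sub_zero]

lemma rpoly_isHomogeneous {d a l : ℕ} (hd : 2 ≤ d) (hl : l = d - 2)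
    {F G : MvPolynomial (Fin 2) k} (hF : F.IsHomogeneous a) (hG : G.IsHomogeneous (a + l)) :
    (rpoly d F G).IsHomogeneous (a + d - 1) := by
  apply MvPolynomial.IsHomogeneous.sub
  · have h1 : (X (0 : Fin 4) * rename rr G).IsHomogeneous (1 + (a + l)) :=
      (isHomogeneous_X k 0).mul hG.rename_isHomogeneous
    have h : 1 + (a + l) = a + d - 1 := by omega
    rwa [h] at h1
  · have h1 : ((X (1 : Fin 4)) ^ (d-1) * rename rr F).IsHomogeneous ((d-1) + a) :=
      (isHomogeneous_X_pow 1 (d-1)).mul hF.rename_isHomogeneous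
    have h : (d-1) + a = a + d - 1 := by omega
    rwa [h] at h1

lemma rpoly_ne_zero {d : ℕ} (hd : 2 ≤ d) {F G : MvPolynomial (Fin 2) k} (hG0 : G ≠ 0) :
    rpoly d F G ≠ 0 := by
  intro h
  obtain ⟨u, hu⟩ := (support_nonempty.mpr hG0)
  have := coeff_key d hd G F u
  rw [h, coeff_zero] at this
  exact (mem_support_iff.mp hu) this.symm

end ExtremalAux

open ExtremalAux

set_option maxHeartbeats 1000000 in
/-- Let `F, G ∈ k[z,w]` be nonzero homogeneous polynomials of degrees `a ≥ 1` and
`a + l` with `l = d - 2`, `d ≥ 2`, and with no common zeros (equivalently, relatively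
prime).  Let `I = (x², xy, y^d, xG - y^{d-1}F) ⊆ k[x,y,z,w]`.  Then the Hilbert
polynomial of `k[x,y,z,w]/I` is `d·n + 1 - g` where `g = (d-2)(d-3)/2 - a`: for all
sufficiently large `n`, the degree-`n` graded piece of the quotient has `k`-dimension
`d·n + 1 - g`. -/
theorem extremal_curve_hilbert_polynomial (k : Type*) [Field k] (d a l : ℕ)
    (hd : 2 ≤ d) (ha : 1 ≤ a) (hl : l = d - 2)
    (F G : MvPolynomial (Fin 2) k)
    (hF : F.IsHomogeneous a) (hG : G.IsHomogeneous (a + l))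
    (hF0 : F ≠ 0) (hG0 : G ≠ 0) (hcop : IsRelPrime F G) :
    let ρ : Fin 2 → Fin 4 := fun i => ⟨i.val + 2, by omega⟩
    let I : Ideal (MvPolynomial (Fin 4) k) :=
      Ideal.span {X 0 ^ 2, X 0 * X 1, X 1 ^ d,
        X 0 * rename ρ G - X 1 ^ (d - 1) * rename ρ F}
    let g : ℤ := ((d : ℤ) - 2) * ((d : ℤ) - 3) / 2 - (a : ℤ)
    ∃ N : ℕ, ∀ n : ℕ, N ≤ n →
      (Module.finrank k
        (↥(homogeneousSubmodule (Fin 4) k n) ⧸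
          Submodule.comap (homogeneousSubmodule (Fin 4) k n).subtype
            (I.restrictScalars k)) : ℤ) = (d : ℤ) * (n : ℤ) + 1 - g := by
  intro ρ I g
  refine ⟨a + d - 1, fun n hn => ?_⟩
  -- basic bounds
  have hn2 : 2 ≤ n := by omega
  have hdn : d ≤ n := by omega
  have hadn : a + d - 1 ≤ n := by omega
  -- notation
  set r : MvPolynomial (Fin 4) k := rpoly d F G with hr_def
  have hrI : I = Ideal.span {X 0 ^ 2, X 0 * X 1, X 1 ^ d, r} := rfl
  have hr_hom : r.IsHomogeneous (a + d - 1) := rpoly_isHomogeneous hd hl hF hG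
  have hr0 : r ≠ 0 := rpoly_ne_zero hd hG0
  set V : Submodule k (MvPolynomial (Fin 4) k) := homogeneousSubmodule (Fin 4) k n with hV_def
  set m : ℕ := n - (a + d - 1) with hm_def
  have hm : m + (a + d - 1) = n := by omega
  set mon : (Fin 4 →₀ ℕ) → MvPolynomial (Fin 4) k := fun s => monomial s (1:k) with hmon_def
  set SM : Set (Fin 4 →₀ ℕ) :=
    {s | s.degree = n ∧ (2 ≤ s 0 ∨ (1 ≤ s 0 ∧ 1 ≤ s 1) ∨ d ≤ s 1)} with hSM_def
  set Wm : Submodule k (MvPolynomial (Fin 4) k) := Submodule.span k (mon '' SM) with hWm_def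
  set e2 : ℕ → ℕ → (Fin 2 →₀ ℕ) :=
    fun p q => Finsupp.single 0 p + Finsupp.single 1 q with he2_def
  set L : MvPolynomial (Fin 2) k →ₗ[k] MvPolynomial (Fin 4) k :=
    (LinearMap.mulLeft k r).comp (rename (R := k) rr).toLinearMap with hL_def
  set mon2 : Fin (m+1) → MvPolynomial (Fin 2) k :=
    fun p => monomial (e2 p (m - p)) (1:k) with hmon2_def
  set wr : Fin (m+1) → MvPolynomial (Fin 4) k := fun p => L (mon2 p) with hwr_def
  set Wr : Submodule k (MvPolynomial (Fin 4) k) := Submodule.span k (Set.range wr) with hWr_def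
  set eU : (Fin n ⊕ (Σ j : Fin d, Fin (n + 1 - j.val))) → (Fin 4 →₀ ℕ) :=
    fun x => match x with
    | .inl p => Finsupp.single 0 1 + Finsupp.single 2 p.val + Finsupp.single 3 (n - 1 - p.val)
    | .inr x => Finsupp.single 1 x.1.val + Finsupp.single 2 x.2.val
        + Finsupp.single 3 (n - x.1.val - x.2.val) with heU_def
  set U : Submodule k (MvPolynomial (Fin 4) k) := Submodule.span k (mon '' Set.range eU)
    with hU_def
  -- linear independence of monomials
  have hmon_li : LinearIndependent k mon := by
    have h := (basisMonomials (Fin 4) k).linearIndependent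
    rwa [coe_basisMonomials] at h
  -- injectivity of eU
  have heU_inj : Function.Injective eU := by
    intro x y hxy
    rcases x with p | ⟨j, p⟩ <;> rcases y with q | ⟨j', q⟩
    · have h := congrArg (fun s => s 2) hxy
      simp [heU_def, Finsupp.single_apply] at h
      exact congrArg Sum.inl (Fin.ext h)
    · have h := congrArg (fun s => s 0) hxy
      simp [heU_def, Finsupp.single_apply] at h
    · have h := congrArg (fun s => s 0) hxy
      simp [heU_def, Finsupp.single_apply] at h
    · have h1 := congrArg (fun s => s 1) hxy
      simp [heU_def, Finsupp.single_apply] at h1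
      obtain rfl : j = j' := Fin.ext h1
      have h2 := congrArg (fun s => s 2) hxy
      simp [heU_def, Finsupp.single_apply] at h2
      obtain rfl : p = q := Fin.ext h2
      rfl
  -- finite dimensionality
  have hSfin : {s : Fin 4 →₀ ℕ | s.degree = n}.Finite :=
    (Finsupp.finite_of_degree_le n).subset (fun s hs => le_of_eq hs)
  haveI hVfd : FiniteDimensional k V := by
    rw [hV_def, homogeneousSubmodule_eq_finsupp_supported]
    haveI := hSfin.to_subtype
    exact Module.Finite.of_basis (basisRestrictSupport k _)
  haveI hUfd : FiniteDimensional k U :=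
    FiniteDimensional.span_of_finite k ((Set.finite_range eU).image mon)
  haveI hWmfd : FiniteDimensional k Wm :=
    FiniteDimensional.span_of_finite k ((hSfin.subset (fun s hs => hs.1)).image mon)
  haveI hWrfd : FiniteDimensional k Wr :=
    FiniteDimensional.span_of_finite k (Set.finite_range wr)
  -- U and Wm are disjoint
  have hdisjUWm : Disjoint U Wm := by
    refine hmon_li.disjoint_span_image ?_
    rw [Set.disjoint_left]
    rintro s ⟨x, rfl⟩ hSM
    obtain ⟨hdeg, hcond⟩ := hSM
    match x with
    | .inl p =>
      have h0 : (eU (Sum.inl p)) 0 = 1 := by simp [heU_def, Finsupp.single_apply]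
      have h1 : (eU (Sum.inl p)) 1 = 0 := by simp [heU_def, Finsupp.single_apply]
      rw [h0, h1] at hcond
      omega
    | .inr x =>
      have h0 : (eU (Sum.inr x)) 0 = 0 := by simp [heU_def, Finsupp.single_apply]
      have h1 : (eU (Sum.inr x)) 1 = x.1.val := by simp [heU_def, Finsupp.single_apply]
      rw [h0, h1] at hcond
      have := x.1.isLt
      omega
  -- U ⊔ Wm = V
  have hsupV : U ⊔ Wm = V := by
    apply le_antisymm
    · refine sup_le ?_ ?_
      · rw [hU_def, Submodule.span_le]
        rintro _ ⟨_, ⟨x, rfl⟩, rfl⟩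
        rw [SetLike.mem_coe, hV_def, mem_homogeneousSubmodule]
        refine isHomogeneous_monomial 1 ?_
        rcases x with p | ⟨j, p⟩
        · have hp := p.isLt
          rw [deg4]
          simp [heU_def, Finsupp.single_apply]
          omega
        · have hj := j.isLt
          have hp := p.isLt
          rw [deg4]
          simp [heU_def, Finsupp.single_apply]
          omega
      · rw [hWm_def, Submodule.span_le]
        rintro _ ⟨s, hs, rfl⟩
        rw [SetLike.mem_coe, hV_def, mem_homogeneousSubmodule]
        exact isHomogeneous_monomial 1 hs.1
    · intro f hf
      have hfh : f.IsHomogeneous n := hf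
      rw [f.as_sum]
      refine Submodule.sum_mem _ fun v hv => ?_
      have hvdeg : v.degree = n := supp_degree hfh hv
      have hvdeg4 : v 0 + v 1 + v 2 + v 3 = n := by rw [← deg4]; exact hvdeg
      have hsm : monomial v (coeff v f) = (coeff v f) • mon v := by
        rw [hmon_def, smul_monomial, smul_eq_mul, mul_one]
      rw [hsm]
      refine Submodule.smul_mem _ _ ?_
      by_cases hC : 2 ≤ v 0 ∨ (1 ≤ v 0 ∧ 1 ≤ v 1) ∨ d ≤ v 1
      · exact Submodule.mem_sup_right (Submodule.subset_span ⟨v, ⟨hvdeg, hC⟩, rfl⟩)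
      · push_neg at hC
        by_cases h0 : v 0 = 1
        · have hlt : v 2 < n := by omega
          have heq : eU (Sum.inl (⟨v 2, hlt⟩ : Fin n)) = v := by
            ext i
            fin_cases i <;> simp [heU_def, Finsupp.single_apply] <;> omega
          exact Submodule.mem_sup_left (Submodule.subset_span
            ⟨eU (Sum.inl ⟨v 2, hlt⟩), ⟨Sum.inl ⟨v 2, hlt⟩, rfl⟩, by rw [heq]⟩)
        · have h00 : v 0 = 0 := by omega
          have hjlt : v 1 < d := by omega
          have hplt : v 2 < n + 1 - v 1 := by omega
          have heq : eU (Sum.inr ⟨⟨v 1, hjlt⟩, ⟨v 2, hplt⟩⟩) = v := by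
            ext i
            fin_cases i <;> simp [heU_def, Finsupp.single_apply] <;> omega
          exact Submodule.mem_sup_left (Submodule.subset_span
            ⟨eU (Sum.inr ⟨⟨v 1, hjlt⟩, ⟨v 2, hplt⟩⟩), ⟨Sum.inr ⟨⟨v 1, hjlt⟩, ⟨v 2, hplt⟩⟩, rfl⟩,
              by rw [heq]⟩)
  -- Wm and Wr are disjoint
  -- membership in Wm forces support in SM
  let K : Submodule k (MvPolynomial (Fin 4) k) :=
    { carrier := setOf fun f => ∀ t, t ∉ SM → coeff t f = 0,
      add_mem' := fun {f g} hf hg t ht => by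
        rw [coeff_add, hf t ht, hg t ht, add_zero],
      zero_mem' := fun t ht => coeff_zero t,
      smul_mem' := fun c f hf t ht => by
        rw [coeff_smul, hf t ht, smul_zero] }
  have hWmK : ∀ x ∈ Wm, ∀ t, t ∉ SM → coeff t x = 0 := by
    have hK : Wm ≤ K := by
      rw [hWm_def, Submodule.span_le]
      rintro _ ⟨s, hs, rfl⟩ t ht
      rw [hmon_def, coeff_monomial, if_neg]
      intro hst
      exact ht (hst ▸ hs)
    exact fun x hx => hK hx
  have hdisjWmWr : Disjoint Wm Wr := by
    rw [Submodule.disjoint_def]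
    intro x hxm hxr
    have hWr_map : Wr = Submodule.map L (Submodule.span k (Set.range mon2)) := by
      rw [hWr_def, Submodule.map_span, ← Set.range_comp]
      rfl
    rw [hWr_map] at hxr
    obtain ⟨E, _, hE⟩ := hxr
    have hLE : L E = r * rename rr E := by
      simp only [hL_def, LinearMap.comp_apply, AlgHom.toLinearMap_apply,
        LinearMap.mulLeft_apply]
    have hxE : x = rpoly d (F * E) (G * E) := by
      rw [← hE, hLE, hr_def, rpoly, rpoly, map_mul, map_mul]
      ring
    have hGE : G * E = 0 := by
      apply MvPolynomial.ext
      intro u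
      rw [coeff_zero]
      have h1 := coeff_key (k := k) d hd (G * E) (F * E) u
      rw [← hxE] at h1
      rw [← h1]
      apply hWmK x hxm
      rintro ⟨hdeg, hcond⟩
      have hc0 : (Finsupp.single (0:Fin 4) 1 + Finsupp.mapDomain rr u : Fin 4 →₀ ℕ) 0 = 1 := by
        rw [Finsupp.add_apply, md0, Finsupp.single_eq_same]
      have hc1 : (Finsupp.single (0:Fin 4) 1 + Finsupp.mapDomain rr u : Fin 4 →₀ ℕ) 1 = 0 := by
        rw [Finsupp.add_apply, md1, Finsupp.single_eq_of_ne (by decide)]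
      rw [hc0, hc1] at hcond
      omega
    have hE0 : E = 0 := by
      rcases mul_eq_zero.mp hGE with h | h
      · exact absurd h hG0
      · exact h
    rw [← hE, hE0, map_zero]
  -- V ⊓ I = Wm ⊔ Wr
  have hLE : ∀ E, L E = r * rename rr E := fun E => by
    simp only [hL_def, LinearMap.comp_apply, AlgHom.toLinearMap_apply, LinearMap.mulLeft_apply]
  have hmape2 : ∀ p q : ℕ, Finsupp.mapDomain rr (e2 p q) =
      Finsupp.single 2 p + Finsupp.single 3 q := by
    intro p q
    rw [he2_def]
    simp only [Finsupp.mapDomain_add, Finsupp.mapDomain_single]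
    norm_num [show rr 0 = 2 from rfl, show rr 1 = 3 from rfl]
  have he2deg : ∀ p q : ℕ, (e2 p q).degree = p + q := by
    intro p q
    rw [deg2, he2_def]
    simp [Finsupp.single_apply]
  have hW : V ⊓ (I.restrictScalars k) = Wm ⊔ Wr := by
    apply le_antisymm
    · -- hard direction
      intro x hx
      rw [Submodule.mem_inf] at hx
      obtain ⟨hxV, hxI⟩ := hx
      have hxI' : x ∈ Ideal.span
          (insert (X 0 ^ 2) (insert (X 0 * X 1) (insert (X 1 ^ d)
            ({r} : Set (MvPolynomial (Fin 4) k))))) := by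
        rw [(Submodule.restrictScalars_mem k I x)] at hxI
        rw [hrI] at hxI
        exact hxI
      rw [Ideal.span, Submodule.mem_span_insert] at hxI'
      obtain ⟨c1, z1, hz1, hx1⟩ := hxI'
      rw [Submodule.mem_span_insert] at hz1
      obtain ⟨c2, z2, hz2, hz1e⟩ := hz1
      rw [Submodule.mem_span_insert] at hz2
      obtain ⟨c3, z3, hz3, hz2e⟩ := hz2
      rw [Submodule.mem_span_singleton] at hz3
      obtain ⟨c4, hz3e⟩ := hz3
      have hxe : x = c1 * (X 0 ^ 2) + (c2 * (X 0 * X 1) + (c3 * (X 1 ^ d) + c4 * r)) := by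
        rw [hx1, hz1e, hz2e, ← hz3e]
        simp only [smul_eq_mul]
      have hhom2 : (X 0 * X 1 : MvPolynomial (Fin 4) k).IsHomogeneous 2 := by
        simpa using (isHomogeneous_X k (0 : Fin 4)).mul (isHomogeneous_X k (1 : Fin 4))
      have hx2 : x = (homogeneousComponent (n-2) c1) * (X 0 ^ 2)
          + ((homogeneousComponent (n-2) c2) * (X 0 * X 1)
            + ((homogeneousComponent (n-d) c3) * (X 1 ^ d)
              + (homogeneousComponent (n-(a+d-1)) c4) * r)) := by
        calc x = homogeneousComponent n x := by
              rw [homogeneousComponent_of_mem hxV, if_pos rfl]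
          _ = _ := by
              rw [hxe, map_add, map_add, map_add,
                homogeneousComponent_mul_right hn2 _ (isHomogeneous_X_pow 0 2),
                homogeneousComponent_mul_right hn2 _ hhom2,
                homogeneousComponent_mul_right hdn _ (isHomogeneous_X_pow 1 d),
                homogeneousComponent_mul_right hadn _ hr_hom]
      -- generic monomial-ideal membership
      have hgen : ∀ (cc : MvPolynomial (Fin 4) k) (e : ℕ), cc.IsHomogeneous (n - e) →
          ∀ ss : Fin 4 →₀ ℕ,
          (∀ u : Fin 4 →₀ ℕ, u.degree = n - e → (ss + u) ∈ SM) →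
          cc * monomial ss 1 ∈ Wm := by
        intro cc e hcc ss hcond
        rw [hWm_def, mul_comm]
        apply mem_span_mono
        intro t ht
        obtain ⟨u, hu, rfl⟩ := support_monomial_mul ss 1 cc ht
        exact hcond u (supp_degree hcc hu)
      have hDr : ∀ (D : MvPolynomial (Fin 4) k), D.IsHomogeneous (n - (a+d-1)) →
          D * r ∈ Wm ⊔ Wr := by
        intro D hD
        rw [D.as_sum, Finset.sum_mul]
        refine Submodule.sum_mem _ fun v hv => ?_
        have hvdeg : v.degree = n - (a+d-1) := supp_degree hD hv
        have hv4 : v 0 + v 1 + v 2 + v 3 = n - (a+d-1) := by rw [← deg4]; exact hvdeg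
        by_cases h00 : v 0 = 0 ∧ v 1 = 0
        · refine Submodule.mem_sup_right ?_
          have hple : v 2 < m + 1 := by omega
          have hveq : Finsupp.mapDomain rr (e2 (v 2) (m - v 2)) = v := by
            rw [hmape2]
            ext i
            fin_cases i <;> simp [Finsupp.single_apply] <;> omega
          have hkey : monomial v (coeff v D) * r = (coeff v D) • wr ⟨v 2, hple⟩ := by
            rw [hwr_def]
            simp only [hmon2_def]
            rw [hLE, rename_monomial]
            rw [show e2 ((⟨v 2, hple⟩ : Fin (m+1)) : ℕ) (m - ((⟨v 2, hple⟩ : Fin (m+1)) : ℕ))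
                = e2 (v 2) (m - v 2) from rfl, hveq,
              ← mul_smul_comm, smul_monomial, smul_eq_mul, mul_one]
            ring
          rw [hkey]
          exact Submodule.smul_mem _ _ (Submodule.subset_span ⟨⟨v 2, hple⟩, rfl⟩)
        · refine Submodule.mem_sup_left ?_
          rw [hWm_def]
          apply mem_span_mono
          intro t ht
          obtain ⟨u, hu, rfl⟩ := support_monomial_mul v (coeff v D) r ht
          rcases support_rpoly d F G hu with ⟨w, hw, rfl⟩ | ⟨w, hw, rfl⟩
          · have hwdeg : w.degree = a + l := supp_degree hG hw
            have hsd : (Finsupp.single (0 : Fin 4) 1).degree = 1 := by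
              rw [deg4]; simp [Finsupp.single_apply]
            refine ⟨?_, ?_⟩
            · rw [deg_add4, deg_add4, md_deg, hvdeg, hsd, hwdeg]; omega
            · have hval0 : (v + (Finsupp.single (0 : Fin 4) 1 + Finsupp.mapDomain rr w)
                    : Fin 4 →₀ ℕ) 0 = v 0 + 1 := by
                simp [Finsupp.add_apply, Finsupp.single_apply, md0 w]
              have hval1 : (v + (Finsupp.single (0 : Fin 4) 1 + Finsupp.mapDomain rr w)
                    : Fin 4 →₀ ℕ) 1 = v 1 := by
                simp [Finsupp.add_apply, Finsupp.single_apply, md1 w]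
              rw [hval0, hval1]
              omega
          · have hwdeg : w.degree = a := supp_degree hF hw
            have hsd : (Finsupp.single (1 : Fin 4) (d-1)).degree = d - 1 := by
              rw [deg4]; simp [Finsupp.single_apply]
            refine ⟨?_, ?_⟩
            · rw [deg_add4, deg_add4, md_deg, hvdeg, hsd, hwdeg]; omega
            · have hval0 : (v + (Finsupp.single (1 : Fin 4) (d-1) + Finsupp.mapDomain rr w)
                    : Fin 4 →₀ ℕ) 0 = v 0 := by
                simp [Finsupp.add_apply, Finsupp.single_apply, md0 w]
              have hval1 : (v + (Finsupp.single (1 : Fin 4) (d-1) + Finsupp.mapDomain rr w)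
                    : Fin 4 →₀ ℕ) 1 = v 1 + (d - 1) := by
                simp [Finsupp.add_apply, Finsupp.single_apply, md1 w]
              rw [hval0, hval1]
              omega
      rw [hx2]
      refine Submodule.add_mem _ (Submodule.mem_sup_left ?_)
        (Submodule.add_mem _ (Submodule.mem_sup_left ?_)
          (Submodule.add_mem _ (Submodule.mem_sup_left ?_) ?_))
      · rw [show (X (0:Fin 4) ^ 2 : MvPolynomial (Fin 4) k)
            = monomial (Finsupp.single 0 2) 1 from X_pow_eq_monomial]
        refine hgen _ 2 (homogeneousComponent_isHomogeneous _ _) _ fun u hu => ?_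
        have hsd : (Finsupp.single (0 : Fin 4) 2).degree = 2 := by
          rw [deg4]; simp [Finsupp.single_apply]
        refine ⟨by rw [deg_add4, hsd, hu]; omega, Or.inl ?_⟩
        rw [Finsupp.add_apply, Finsupp.single_eq_same]
        omega
      · rw [show (X 0 * X 1 : MvPolynomial (Fin 4) k)
            = monomial (Finsupp.single 0 1 + Finsupp.single 1 1) 1 by
          rw [← pow_one (X (R := k) (0 : Fin 4)), ← pow_one (X (R := k) (1 : Fin 4)),
            X_pow_eq_monomial, X_pow_eq_monomial, monomial_mul, one_mul]]
        refine hgen _ 2 (homogeneousComponent_isHomogeneous _ _) _ fun u hu => ?_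
        have hsd : (Finsupp.single (0 : Fin 4) 1 + Finsupp.single 1 1 : Fin 4 →₀ ℕ).degree = 2 := by
          rw [deg4]; simp [Finsupp.add_apply, Finsupp.single_apply]
        refine ⟨by rw [deg_add4, hsd, hu]; omega, Or.inr (Or.inl ⟨?_, ?_⟩)⟩
        · have : (Finsupp.single (0:Fin 4) 1 + Finsupp.single 1 1 + u : Fin 4 →₀ ℕ) 0 = 1 + u 0 := by
            simp [Finsupp.add_apply, Finsupp.single_apply]
          omega
        · have : (Finsupp.single (0:Fin 4) 1 + Finsupp.single 1 1 + u : Fin 4 →₀ ℕ) 1 = 1 + u 1 := by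
            simp [Finsupp.add_apply, Finsupp.single_apply]
          omega
      · rw [show (X (1:Fin 4) ^ d : MvPolynomial (Fin 4) k)
            = monomial (Finsupp.single 1 d) 1 from X_pow_eq_monomial]
        refine hgen _ d (homogeneousComponent_isHomogeneous _ _) _ fun u hu => ?_
        have hsd : (Finsupp.single (1 : Fin 4) d).degree = d := by
          rw [deg4]; simp [Finsupp.single_apply]
        refine ⟨by rw [deg_add4, hsd, hu]; omega, Or.inr (Or.inr ?_)⟩
        rw [Finsupp.add_apply, Finsupp.single_eq_same]
        omega
      · exact hDr _ (homogeneousComponent_isHomogeneous _ _)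
    · -- easy direction
      refine sup_le ?_ ?_
      · rw [hWm_def, Submodule.span_le]
        rintro _ ⟨s, hs, rfl⟩
        rw [SetLike.mem_coe, Submodule.mem_inf]
        refine ⟨isHomogeneous_monomial 1 hs.1, ?_⟩
        rw [Submodule.restrictScalars_mem, hrI]
        rcases hs.2 with h | ⟨h1, h2⟩ | h
        · have hle : Finsupp.single (0 : Fin 4) 2 ≤ s := Finsupp.single_le_iff.mpr h
          rw [show mon s = monomial (s - Finsupp.single 0 2) 1 * (X 0 ^ 2) by
            rw [hmon_def, X_pow_eq_monomial, monomial_mul, one_mul, tsub_add_cancel_of_le hle]]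
          exact Ideal.mul_mem_left _ _ (Ideal.subset_span (by simp))
        · have hle : (Finsupp.single (0 : Fin 4) 1 + Finsupp.single 1 1 : Fin 4 →₀ ℕ) ≤ s := by
            rw [Finsupp.le_def]
            intro i
            fin_cases i <;> simp [Finsupp.add_apply, Finsupp.single_apply] <;> omega
          rw [show mon s = monomial (s - (Finsupp.single 0 1 + Finsupp.single 1 1)) 1
              * (X 0 * X 1) by
            rw [hmon_def, show (X 0 * X 1 : MvPolynomial (Fin 4) k)
                = monomial (Finsupp.single 0 1 + Finsupp.single 1 1) 1 by
              rw [← pow_one (X (R := k) (0 : Fin 4)), ← pow_one (X (R := k) (1 : Fin 4)),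
                X_pow_eq_monomial, X_pow_eq_monomial, monomial_mul, one_mul],
              monomial_mul, one_mul, tsub_add_cancel_of_le hle]]
          exact Ideal.mul_mem_left _ _ (Ideal.subset_span (by simp))
        · have hle : Finsupp.single (1 : Fin 4) d ≤ s := Finsupp.single_le_iff.mpr h
          rw [show mon s = monomial (s - Finsupp.single 1 d) 1 * (X 1 ^ d) by
            rw [hmon_def, X_pow_eq_monomial, monomial_mul, one_mul, tsub_add_cancel_of_le hle]]
          exact Ideal.mul_mem_left _ _ (Ideal.subset_span (by simp))
      · rw [hWr_def, Submodule.span_le]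
        rintro _ ⟨p, rfl⟩
        rw [SetLike.mem_coe, Submodule.mem_inf]
        constructor
        · rw [hwr_def]
          simp only [hmon2_def]
          rw [hLE]
          rw [hV_def, mem_homogeneousSubmodule]
          have hmono : ((monomial (e2 (p : ℕ) (m - p)) (1:k))).IsHomogeneous m := by
            refine isHomogeneous_monomial 1 ?_
            rw [he2deg]
            have := p.isLt
            omega
          have := hr_hom.mul (hmono.rename_isHomogeneous (f := rr))
          rwa [show a + d - 1 + m = n by omega] at this
        · rw [Submodule.restrictScalars_mem, hrI, hwr_def]
          simp only [hmon2_def]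
          rw [hLE]
          exact Ideal.mul_mem_right _ _ (Ideal.subset_span (by simp))
  -- linear independence of wr
  have hwr_li : LinearIndependent k wr := by
    have hL_inj : Function.Injective L := by
      intro u v huv
      simp only [hL_def, LinearMap.comp_apply, AlgHom.toLinearMap_apply,
        LinearMap.mulLeft_apply] at huv
      exact rename_injective rr rr_inj (mul_left_cancel₀ hr0 huv)
    have hmon2_li : LinearIndependent k mon2 := by
      have h := (basisMonomials (Fin 2) k).linearIndependent
      rw [coe_basisMonomials] at h
      have hinj : Function.Injective (fun p : Fin (m+1) => e2 p (m - p)) := by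
        intro p q hpq
        have h0 := congrArg (fun s => s 0) hpq
        simp [he2_def, Finsupp.single_apply] at h0
        exact Fin.ext h0
      exact h.comp _ hinj
    exact hmon2_li.map' L (LinearMap.ker_eq_bot.mpr hL_inj)
  -- linear independence of U family
  have hU_li : LinearIndependent k (mon ∘ eU) := hmon_li.comp eU heU_inj
  -- finrank computations
  have hfU : Module.finrank k U = n + ∑ j : Fin d, (n + 1 - j.val) := by
    rw [hU_def, ← Set.range_comp, finrank_span_eq_card hU_li]
    simp [Fintype.card_sigma]
  have hfWr : Module.finrank k Wr = m + 1 := by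
    rw [hWr_def, finrank_span_eq_card hwr_li, Fintype.card_fin]
  have eV : Module.finrank k V = Module.finrank k U + Module.finrank k Wm := by
    have h := Submodule.finrank_sup_add_finrank_inf_eq U Wm
    rwa [hsupV, hdisjUWm.eq_bot, finrank_bot, add_zero] at h
  have eW : Module.finrank k ↥(Wm ⊔ Wr) = Module.finrank k Wm + Module.finrank k Wr := by
    have h := Submodule.finrank_sup_add_finrank_inf_eq Wm Wr
    rwa [hdisjWmWr.eq_bot, finrank_bot, add_zero] at h
  set W' : Submodule k V := Submodule.comap V.subtype (I.restrictScalars k) with hW'_def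
  have e1 : Module.finrank k (V ⧸ W') + Module.finrank k W' = Module.finrank k V :=
    Submodule.finrank_quotient_add_finrank W'
  have e2' : Module.finrank k W' = Module.finrank k ↥(Wm ⊔ Wr) := by
    rw [← Submodule.finrank_map_subtype_eq V W', Submodule.map_comap_subtype, hW]
  -- final arithmetic
  have key : Module.finrank k (V ⧸ W') + (m + 1) = n + ∑ j : Fin d, (n + 1 - j.val) := by
    rw [e2', eW, hfWr] at e1
    rw [eV, hfU] at e1
    omega
  have hsum : (∑ j : Fin d, ((n + 1 - (j : ℕ) : ℕ) : ℤ))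
      = (d:ℤ) * ((n:ℤ) + 1) - ∑ j : Fin d, ((j : ℕ) : ℤ) := by
    have h1 : ∀ j : Fin d, ((n + 1 - (j : ℕ) : ℕ) : ℤ) = ((n:ℤ) + 1) - ((j:ℕ) : ℤ) := by
      intro j
      have hj : (j : ℕ) ≤ n + 1 := by have := j.isLt; omega
      rw [Nat.cast_sub hj]
      push_cast
      ring
    rw [Finset.sum_congr rfl (fun j _ => h1 j), Finset.sum_sub_distrib, Finset.sum_const,
      Finset.card_univ, Fintype.card_fin]
    push_cast
    ring
  have hgauss : (∑ j : Fin d, ((j : ℕ) : ℤ)) * 2 = (d:ℤ) * ((d:ℤ) - 1) := by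
    have h2 := Finset.sum_range_id_mul_two d
    have h3 : (∑ j : Fin d, ((j : ℕ) : ℤ)) = ((∑ i ∈ Finset.range d, i : ℕ) : ℤ) := by
      rw [Nat.cast_sum]
      exact Fin.sum_univ_eq_sum_range (fun i => ((i : ℕ) : ℤ)) d
    rw [h3]
    have h4 := congrArg (Nat.cast : ℕ → ℤ) h2
    push_cast [Nat.cast_sub (show 1 ≤ d by omega)] at h4
    push_cast
    linarith
  obtain ⟨t, ht⟩ : ∃ t : ℤ, ((d:ℤ) - 2) * ((d:ℤ) - 3) = 2 * t := by
    rcases Int.even_or_odd (d:ℤ) with ⟨c, hc⟩ | ⟨c, hc⟩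
    · exact ⟨(c - 1) * (2*c - 3), by rw [hc]; ring⟩
    · exact ⟨(2*c - 1) * (c - 1), by rw [hc]; ring⟩
  have hgt : g = t - a := by
    show ((d : ℤ) - 2) * ((d : ℤ) - 3) / 2 - (a : ℤ) = t - a
    rw [ht, Int.mul_ediv_cancel_left _ two_ne_zero]
  have h2t : 2*t = 2*(∑ j : Fin d, ((j : ℕ) : ℤ)) - 4*(d:ℤ) + 6 := by
    linear_combination -ht - hgauss
  have hE4 : t = (∑ j : Fin d, ((j : ℕ) : ℤ)) - 2*(d:ℤ) + 3 := by linarith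
  have hmz : (m:ℤ) = (n:ℤ) - (a:ℤ) - (d:ℤ) + 1 := by
    have h1 : m = n - (a + d - 1) := hm_def
    rw [h1, Nat.cast_sub hadn, Nat.cast_sub (show 1 ≤ a + d by omega)]
    push_cast
    ring
  have hE1 : (Module.finrank k (↥V ⧸ W') : ℤ) + ((m:ℤ) + 1)
      = (n:ℤ) + ((d:ℤ) * ((n:ℤ) + 1) - ∑ j : Fin d, ((j : ℕ) : ℤ)) := by
    have hc := congrArg (Nat.cast : ℕ → ℤ) key
    push_cast at hc
    rw [hsum] at hc
    linarith
  rw [hgt]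
  linear_combination hE1 - hmz + hE4
end

section
/- Let C be a curve of degree d ≥ 2 in ℙ³ over a field k, with arithmetic genus g ≤ (d-2)(d-3)/2, and set ν = (d-1)(d-2)/2 - g. Inside H⁰(𝒪_{ℙ³}(ν+1)), the subspace T of forms of the shape f = x·G_ν(z,w) - Σ_{j=0}^{d-1} y^j·F_{ν+1-j}(z,w) (with G of degree ν and F_{ν+1-j} of degree ν+1-j) has dimension (ν+1)(d+1) + 1 - (d-1)(d-2)/2, which equals h⁰(𝒪_C(ν+1)) + 1 = (ν+1)d + 2 - g; consequently T contains a nonzero form vanishing on C. -/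
open MvPolynomial Finset

namespace MonoidAux

lemma deg2 (s : Fin 2 →₀ ℕ) : Finsupp.degree s = s 0 + s 1 := by
  rw [Finsupp.degree_apply, Finset.sum_subset (Finset.subset_univ _)
    (fun i _ hi => Finsupp.notMem_support_iff.mp hi), Fin.sum_univ_two]

lemma finsupp2_eq (s : Fin 2 →₀ ℕ) :
    s = Finsupp.single 0 (s 0) + Finsupp.single 1 (s 1) := by
  ext i; fin_cases i <;> simp [Finsupp.single_apply]

lemma mapDomain_eq (ρ : Fin 2 → Fin 4) (h0 : ρ 0 = 2) (h1 : ρ 1 = 3) (s : Fin 2 →₀ ℕ) :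
    Finsupp.mapDomain ρ s = Finsupp.single 2 (s 0) + Finsupp.single 3 (s 1) := by
  conv_lhs => rw [finsupp2_eq s]
  rw [Finsupp.mapDomain_add, Finsupp.mapDomain_single, Finsupp.mapDomain_single, h0, h1]

variable {k : Type*} [Field k]

lemma X0_mul_rename (ρ : Fin 2 → Fin 4) (h0 : ρ 0 = 2) (h1 : ρ 1 = 3)
    (s : Fin 2 →₀ ℕ) (c : k) :
    X 0 * rename ρ (monomial s c) =
      monomial (Finsupp.single 0 1 + (Finsupp.single 2 (s 0) + Finsupp.single 3 (s 1))) c := by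
  rw [rename_monomial, mapDomain_eq ρ h0 h1, ← pow_one (X (R := k) (0 : Fin 4)),
    ← monomial_single_add]

lemma X1pow_mul_rename (ρ : Fin 2 → Fin 4) (h0 : ρ 0 = 2) (h1 : ρ 1 = 3)
    (j : ℕ) (s : Fin 2 →₀ ℕ) (c : k) :
    X 1 ^ j * rename ρ (monomial s c) =
      monomial (Finsupp.single 1 j + (Finsupp.single 2 (s 0) + Finsupp.single 3 (s 1))) c := by
  rw [rename_monomial, mapDomain_eq ρ h0 h1, ← monomial_single_add]

/-- Exponent vectors of the spanning monomials. `p.1 = d` encodes the `x`-family. -/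
noncomputable def eA (d ν : ℕ) (p : ℕ × ℕ) : Fin 4 →₀ ℕ :=
  if p.1 = d then Finsupp.single 0 1 + (Finsupp.single 2 p.2 + Finsupp.single 3 (ν - p.2))
  else Finsupp.single 1 p.1 + (Finsupp.single 2 p.2 + Finsupp.single 3 (ν + 1 - p.1 - p.2))

/-- Index set. -/
def IA (d ν : ℕ) : Finset (ℕ × ℕ) :=
  (Finset.range (d+1)).biUnion
    (fun j => (Finset.range (if j = d then ν+1 else ν+2-j)).image (fun a => (j,a)))

lemma mem_IA {d ν : ℕ} {p : ℕ × ℕ} :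
    p ∈ IA d ν ↔ p.1 < d + 1 ∧ p.2 < (if p.1 = d then ν+1 else ν+2-p.1) := by
  obtain ⟨j, a⟩ := p
  simp only [IA, mem_biUnion, mem_image, mem_range, Prod.mk.injEq]
  constructor
  · rintro ⟨j', hj', a', ha', rfl, rfl⟩
    exact ⟨hj', ha'⟩
  · rintro ⟨hj, ha⟩
    exact ⟨j, hj, a, ha, rfl, rfl⟩

lemma card_IA (d ν : ℕ) : (IA d ν).card = (ν + 1) + ∑ j ∈ range d, (ν + 2 - j) := by
  rw [IA, Finset.card_biUnion]
  · have h : ∀ j, ((range (if j = d then ν+1 else ν+2-j)).image (fun a => (j,a))).card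
        = if j = d then ν+1 else ν+2-j := by
      intro j
      rw [Finset.card_image_of_injective _ (fun a b h => (Prod.ext_iff.mp h).2)]
      exact Finset.card_range _
    simp only [h]
    rw [Finset.sum_range_succ, if_pos rfl,
      Finset.sum_congr rfl (fun j hj => if_neg (Nat.ne_of_lt (Finset.mem_range.mp hj)))]
    exact Nat.add_comm _ _
  · intro x hx y hy hxy
    simp only [Finset.disjoint_left, mem_image, mem_range]
    rintro p ⟨a, _, rfl⟩ ⟨b, _, h⟩
    apply hxy
    have := congrArg Prod.fst h
    simpa using this.symm

lemma eA_apply0 (d ν : ℕ) (p : ℕ × ℕ) :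
    eA d ν p 0 = if p.1 = d then 1 else 0 := by
  unfold eA; split <;> simp [Finsupp.single_apply]

lemma eA_apply1 (d ν : ℕ) (p : ℕ × ℕ) :
    eA d ν p 1 = if p.1 = d then 0 else p.1 := by
  unfold eA; split <;> simp [Finsupp.single_apply]

lemma eA_apply2 (d ν : ℕ) (p : ℕ × ℕ) :
    eA d ν p 2 = p.2 := by
  unfold eA; split <;> simp [Finsupp.single_apply]

lemma eA_inj {d ν : ℕ} {p q : ℕ × ℕ} (h : eA d ν p = eA d ν q) : p = q := by
  have h0 := eA_apply0 d ν q ▸ eA_apply0 d ν p ▸ DFunLike.congr_fun h 0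
  have h1 := eA_apply1 d ν q ▸ eA_apply1 d ν p ▸ DFunLike.congr_fun h 1
  have h2 := eA_apply2 d ν q ▸ eA_apply2 d ν p ▸ DFunLike.congr_fun h 2
  by_cases hp : p.1 = d <;> by_cases hq : q.1 = d <;>
    simp only [hp, hq, if_pos, if_neg, if_true, if_false] at h0 h1 <;>
    [skip; exact absurd h0 one_ne_zero; exact absurd h0.symm one_ne_zero; skip] <;>
    exact Prod.ext (by omega) h2

lemma degree_of_mem_support {s : Fin 2 →₀ ℕ} {G : MvPolynomial (Fin 2) k} {n : ℕ}
    (hG : G.IsHomogeneous n) (hs : s ∈ G.support) : s 0 + s 1 = n := by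
  have := hG (mem_support_iff.mp hs)
  rw [show (1 : Fin 2 → ℕ) = fun _ => 1 from rfl, ← Finsupp.degree_eq_weight_one, deg2] at this
  exact this

end MonoidAux

open MonoidAux

/-- (Lemma on the existence of a monoid surface through a curve.)  Let `d ≥ 2`,
`g ≤ (d-2)(d-3)/2` and `ν = (d-1)(d-2)/2 - g`.  Model the restriction map
`H⁰(𝒪_{ℙ³}(ν+1)) → H⁰(𝒪_C(ν+1))` for a curve `C` of degree `d` and genus `g` by a
`k`-linear map `φ` from `k[x,y,z,w]` to a vector space `V` of dimension
`(ν+1)d + 1 - g` (this value of `h⁰(𝒪_C(ν+1))` is given by Riemann-Roch, since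
`h¹(𝒪_C(ν+1)) = 0`).  Let `T` be the space of forms
`x·G_ν(z,w) - Σ_{j=0}^{d-1} y^j·F_{ν+1-j}(z,w)`.  Then
`dim T = (ν+1)(d+1) + 1 - (d-1)(d-2)/2 = ((ν+1)d + 1 - g) + 1 = h⁰(𝒪_C(ν+1)) + 1`,
and consequently `T` contains a nonzero form vanishing on `C` (i.e. killed by `φ`). -/
theorem monoid_form_through_curve (k : Type*) [Field k] (d : ℕ) (g : ℤ) (ν : ℕ)
    (hd : 2 ≤ d) (hg : g ≤ ((d : ℤ) - 2) * ((d : ℤ) - 3) / 2)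
    (hν : (ν : ℤ) = ((d : ℤ) - 1) * ((d : ℤ) - 2) / 2 - g)
    (V : Type*) [AddCommGroup V] [Module k V] [FiniteDimensional k V]
    (hV : (Module.finrank k V : ℤ) = ((ν : ℤ) + 1) * (d : ℤ) + 1 - g)
    (φ : MvPolynomial (Fin 4) k →ₗ[k] V) :
    let ρ : Fin 2 → Fin 4 := fun i => ⟨i.val + 2, by omega⟩
    let T : Set (MvPolynomial (Fin 4) k) :=
      {f | ∃ (G : MvPolynomial (Fin 2) k) (F : ℕ → MvPolynomial (Fin 2) k),
        G.IsHomogeneous ν ∧ (∀ j < d, (F j).IsHomogeneous (ν + 1 - j)) ∧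
        f = X 0 * rename ρ G -
          ∑ j ∈ Finset.range d, X 1 ^ j * rename ρ (F j)}
    ((Module.finrank k (Submodule.span k T) : ℤ) =
        ((ν : ℤ) + 1) * ((d : ℤ) + 1) + 1 - ((d : ℤ) - 1) * ((d : ℤ) - 2) / 2) ∧
    ((Module.finrank k (Submodule.span k T) : ℤ) =
        (((ν : ℤ) + 1) * (d : ℤ) + 1 - g) + 1) ∧
    ∃ f ∈ T, f ≠ 0 ∧ φ f = 0 := by
  classical
  intro ρ T
  have hρ0 : ρ 0 = 2 := rfl
  have hρ1 : ρ 1 = 3 := rfl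
  -- arithmetic preliminaries
  obtain ⟨a, ha⟩ : ∃ a : ℤ, ((d:ℤ)-1) * ((d:ℤ)-2) = a + a := by
    have h2 := Int.even_mul_succ_self ((d:ℤ)-2)
    have h : ((d:ℤ)-2) * (((d:ℤ)-2)+1) = ((d:ℤ)-1)*((d:ℤ)-2) := by ring
    rw [h] at h2; exact h2
  obtain ⟨b, hb⟩ : ∃ b : ℤ, ((d:ℤ)-2) * ((d:ℤ)-3) = b + b := by
    have h2 := Int.even_mul_succ_self ((d:ℤ)-3)
    have h : ((d:ℤ)-3) * (((d:ℤ)-3)+1) = ((d:ℤ)-2)*((d:ℤ)-3) := by ring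
    rw [h] at h2; exact h2
  rw [hb] at hg
  rw [ha] at hν
  have hga : g ≤ b := by omega
  have hνa : (ν:ℤ) = a - g := by omega
  have hab : a + a - (b + b) = 2*(d:ℤ) - 4 := by rw [← ha, ← hb]; ring
  have hdν : d ≤ ν + 2 := by
    have h : ((d:ℤ)) ≤ (ν:ℤ) + 2 := by omega
    exact_mod_cast h
  -- the family of monomials
  let fam : {p // p ∈ IA d ν} → MvPolynomial (Fin 4) k :=
    fun p => monomial (eA d ν p.1) 1
  have hfam_li : LinearIndependent k fam := by
    have hb := (basisMonomials (Fin 4) k).linearIndependent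
    have : fam = (basisMonomials (Fin 4) k) ∘ (fun p : {p // p ∈ IA d ν} => eA d ν p.1) := by
      funext p
      simp [fam, coe_basisMonomials]
    rw [this]
    exact hb.comp _ (fun p q h => Subtype.ext (eA_inj h))
  let Mp : Set (MvPolynomial (Fin 4) k) := Set.range fam
  -- T is a submodule
  have hzero : (0 : MvPolynomial (Fin 4) k) ∈ T := by
    refine ⟨0, fun _ => 0, isHomogeneous_zero _ _ _, fun j _ => isHomogeneous_zero _ _ _, ?_⟩
    simp
  have hadd : ∀ {f1 f2 : MvPolynomial (Fin 4) k}, f1 ∈ T → f2 ∈ T → f1 + f2 ∈ T := by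
    rintro f1 f2 ⟨G1, F1, hG1, hF1, rfl⟩ ⟨G2, F2, hG2, hF2, rfl⟩
    refine ⟨G1 + G2, fun j => F1 j + F2 j, hG1.add hG2,
      fun j hj => (hF1 j hj).add (hF2 j hj), ?_⟩
    simp only [map_add, mul_add, Finset.sum_add_distrib]
    ring
  have hsmul : ∀ (c : k) {f : MvPolynomial (Fin 4) k}, f ∈ T → c • f ∈ T := by
    rintro c f ⟨G, F, hG, hF, rfl⟩
    refine ⟨C c * G, fun j => C c * F j, ?_, fun j hj => ?_, ?_⟩
    · simpa using (isHomogeneous_C _ c).mul hG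
    · simpa using (isHomogeneous_C _ c).mul (hF j hj)
    · rw [smul_eq_C_mul, mul_sub, Finset.mul_sum]
      congr 1
      · rw [map_mul, rename_C]; ring
      · exact Finset.sum_congr rfl fun j _ => by rw [map_mul, rename_C]; ring
  let T'' : Submodule k (MvPolynomial (Fin 4) k) :=
    { carrier := T
      add_mem' := fun h1 h2 => hadd h1 h2
      zero_mem' := hzero
      smul_mem' := fun c f h => hsmul c h }
  have hspanT : Submodule.span k T = T'' := Submodule.span_eq T''
  -- T ⊆ span Mp
  have hsub1 : T ⊆ ↑(Submodule.span k Mp) := by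
    rintro f ⟨G, F, hG, hF, rfl⟩
    have hmono : ∀ (s : Fin 4 →₀ ℕ) (c : k), (monomial s 1 ∈ Mp) →
        monomial s c ∈ Submodule.span k Mp := by
      intro s c hm
      have : monomial s c = c • monomial s (1:k) := by
        rw [smul_monomial, smul_eq_mul, mul_one]
      rw [this]
      exact Submodule.smul_mem _ _ (Submodule.subset_span hm)
    have hX0 : X 0 * rename ρ G ∈ Submodule.span k Mp := by
      have hrw : X 0 * rename ρ G
          = ∑ s ∈ G.support, X 0 * rename ρ (monomial s (coeff s G)) := by
        conv_lhs => rw [← support_sum_monomial_coeff G]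
        rw [map_sum, Finset.mul_sum]
      rw [hrw]
      refine Submodule.sum_mem _ fun s hs => ?_
      rw [X0_mul_rename ρ hρ0 hρ1]
      refine hmono _ _ ?_
      have hdeg : s 0 + s 1 = ν := degree_of_mem_support hG hs
      refine ⟨⟨(d, s 0), mem_IA.mpr ⟨by omega, by simp; omega⟩⟩, ?_⟩
      show monomial (eA d ν (d, s 0)) 1 = _
      rw [eA]
      rw [show ν - s 0 = s 1 by omega, if_pos rfl]
    have hX1 : ∀ j ∈ range d, X 1 ^ j * rename ρ (F j) ∈ Submodule.span k Mp := by
      intro j hj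
      have hjd := Finset.mem_range.mp hj
      have hrw : X 1 ^ j * rename ρ (F j)
          = ∑ s ∈ (F j).support, X 1 ^ j * rename ρ (monomial s (coeff s (F j))) := by
        conv_lhs => rw [← support_sum_monomial_coeff (F j)]
        rw [map_sum, Finset.mul_sum]
      rw [hrw]
      refine Submodule.sum_mem _ fun s hs => ?_
      rw [X1pow_mul_rename ρ hρ0 hρ1]
      refine hmono _ _ ?_
      have hdeg : s 0 + s 1 = ν + 1 - j := degree_of_mem_support (hF j hjd) hs
      refine ⟨⟨(j, s 0), mem_IA.mpr ⟨by omega, ?_⟩⟩, ?_⟩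
      · rw [if_neg (by omega)]
        omega
      · show monomial (eA d ν (j, s 0)) 1 = _
        rw [eA]
        rw [show ν + 1 - j - s 0 = s 1 by omega, if_neg (show ¬((j, s 0).1 = d) by simp; omega)]
    exact Submodule.sub_mem _ hX0 (Submodule.sum_mem _ hX1)
  -- Mp ⊆ T''
  have hsub2 : Mp ⊆ ↑T'' := by
    rintro x ⟨⟨⟨j, a'⟩, hp⟩, rfl⟩
    have hmem := mem_IA.mp hp
    simp only at hmem
    show monomial (eA d ν (j, a')) 1 ∈ T''
    by_cases hjd : j = d
    · subst hjd
      rw [if_pos rfl] at hmem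
      refine ⟨monomial (Finsupp.single 0 a' + Finsupp.single 1 (ν - a')) 1, fun _ => 0,
        isHomogeneous_monomial 1 ?_, fun j' _ => isHomogeneous_zero _ _ _, ?_⟩
      · rw [deg2]
        simp [Finsupp.single_apply]
        omega
      · rw [X0_mul_rename ρ hρ0 hρ1]
        simp only [map_zero, mul_zero, Finset.sum_const_zero, sub_zero]
        rw [eA]
        simp only [if_pos rfl]
        congr 2 <;> simp [Finsupp.single_apply]
    · rw [if_neg hjd] at hmem
      have hjlt : j < d := by omega
      have : (monomial (eA d ν (j, a')) (1:k)) =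
          -((0 : MvPolynomial (Fin 4) k) - X 1 ^ j * rename ρ
            (monomial (Finsupp.single 0 a' + Finsupp.single 1 (ν + 1 - j - a')) 1)) := by
        rw [X1pow_mul_rename ρ hρ0 hρ1, eA]
        simp only [if_neg hjd, zero_sub, neg_neg]
        congr 2 <;> simp [Finsupp.single_apply]
      rw [this]
      refine T''.neg_mem ?_
      refine ⟨0, fun j' => if j' = j then
          monomial (Finsupp.single 0 a' + Finsupp.single 1 (ν + 1 - j - a')) 1 else 0,
        isHomogeneous_zero _ _ _, fun j' hj' => ?_, ?_⟩
      · dsimp only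
        by_cases h : j' = j
        · subst h
          rw [if_pos rfl]
          refine isHomogeneous_monomial 1 ?_
          rw [deg2]
          simp [Finsupp.single_apply]
          omega
        · rw [if_neg h]; exact isHomogeneous_zero _ _ _
      · rw [map_zero, mul_zero]
        congr 1
        rw [Finset.sum_eq_single j]
        · dsimp only; rw [if_pos rfl]
        · intro j' _ hne; dsimp only; rw [if_neg hne, map_zero, mul_zero]
        · intro h; exact absurd (Finset.mem_range.mpr hjlt) h
  -- span T = span Mp
  have hspan2 : Submodule.span k T = Submodule.span k Mp := by
    apply le_antisymm
    · exact Submodule.span_le.mpr hsub1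
    · rw [hspanT]
      exact Submodule.span_le.mpr hsub2
  -- finrank computation
  have hfr : Module.finrank k (Submodule.span k T) = (ν+1) + ∑ j ∈ range d, (ν+2-j) := by
    rw [hspan2, finrank_span_eq_card hfam_li, Fintype.card_coe, card_IA]
  -- cast the sum to ℤ
  have hcast : ((∑ j ∈ range d, (ν+2-j) : ℕ) : ℤ) = (d:ℤ)*((ν:ℤ)+2) - ∑ j ∈ range d, (j:ℤ) := by
    rw [Nat.cast_sum]
    have h1 : ∀ j ∈ range d, ((ν+2-j : ℕ) : ℤ) = ((ν:ℤ)+2) - (j:ℤ) := by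
      intro j hj
      have hj' := Finset.mem_range.mp hj
      have hle : j ≤ ν + 2 := by omega
      rw [Nat.cast_sub hle]
      push_cast
      ring
    rw [Finset.sum_congr rfl h1, Finset.sum_sub_distrib, Finset.sum_const, card_range,
      nsmul_eq_mul]
  have hgauss : (∑ j ∈ range d, (j:ℤ)) * 2 = (d:ℤ) * ((d:ℤ) - 1) := by
    have h := Finset.sum_range_id_mul_two d
    have h2 : ((∑ j ∈ range d, j : ℕ) : ℤ) * 2 = ((d * (d-1) : ℕ) : ℤ) := by
      exact_mod_cast congrArg (Nat.cast : ℕ → ℤ) h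
    rw [Nat.cast_sum] at h2
    rw [h2, Nat.cast_mul, Nat.cast_sub (by omega)]
    push_cast
    ring
  set S : ℤ := ∑ j ∈ range d, (j:ℤ) with hS
  have key : a - S = 1 - (d:ℤ) := by
    have h2a : a + a = (d:ℤ)*(d:ℤ) - 3*(d:ℤ) + 2 := by rw [← ha]; ring
    have h2S : S * 2 = (d:ℤ)*(d:ℤ) - (d:ℤ) := by rw [hgauss]; ring
    linarith
  have hfrZ : (Module.finrank k (Submodule.span k T) : ℤ)
      = ((ν:ℤ)+1) + ((d:ℤ)*((ν:ℤ)+2) - S) := by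
    rw [hfr]
    push_cast [hcast]
    ring
  have goal1 : (Module.finrank k (Submodule.span k T) : ℤ)
      = ((ν : ℤ) + 1) * ((d : ℤ) + 1) + 1 - ((d : ℤ) - 1) * ((d : ℤ) - 2) / 2 := by
    have hdiv : ((d : ℤ) - 1) * ((d : ℤ) - 2) / 2 = a := by rw [ha]; omega
    rw [hdiv, hfrZ]
    linear_combination key
  have goal2 : (Module.finrank k (Submodule.span k T) : ℤ)
      = (((ν : ℤ) + 1) * (d : ℤ) + 1 - g) + 1 := by
    rw [hfrZ]
    linear_combination key + hνa
  refine ⟨goal1, goal2, ?_⟩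
  -- kernel element
  have hlt : Module.finrank k V < Module.finrank k (Submodule.span k T) := by
    have : (Module.finrank k (Submodule.span k T) : ℤ) = (Module.finrank k V : ℤ) + 1 := by
      rw [goal2, hV]
    omega
  have hni : ¬ Function.Injective (φ.comp (Submodule.span k T).subtype) := by
    intro hinj
    have := LinearMap.finrank_le_finrank_of_injective hinj
    omega
  obtain ⟨x, y, hxy, hne⟩ := Function.not_injective_iff.mp hni
  have hxT : (x : MvPolynomial (Fin 4) k) ∈ T'' := hspanT ▸ x.2
  have hyT : (y : MvPolynomial (Fin 4) k) ∈ T'' := hspanT ▸ y.2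
  refine ⟨(x : MvPolynomial (Fin 4) k) - y, T''.sub_mem hxT hyT, ?_, ?_⟩
  · intro h
    exact hne (Subtype.ext (by rwa [← sub_eq_zero]))
  · have : φ x = φ y := hxy
    rw [map_sub, this, sub_self]
end
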